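/- Let N ≥ 1 be a natural number, c > 0, and H₀ ≤ 0, H₀* ≤ 0 real constants; set θ = H₀* + H₀. Let ζ : (0,∞) → ℝ be differentiable with ζ(t) > 0 for all t > 0, and suppose that −ζ'(t) ≥ c ζ(t)^(1 + 2/N) e^((4H₀/N) t) + θ ζ(t) for all t > 0. Then ζ(t) ≤ (N/(2c))^(N/2) e^((−H₀* − 2H₀) t) t^(−N/2) for all t > 0. -/

import Mathlib

open Real

/-- The differential-inequality argument of the paper's Lemma: if `ζ > 0` is differentiable
on `(0,∞)` and satisfies `-ζ' ≥ c ζ^(1+2/N) e^(4H₀t/N) + (H₀* + H₀) ζ`, then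
`ζ(t) ≤ (N/(2c))^(N/2) e^((-H₀* - 2H₀)t) t^(-N/2)`. -/
theorem differential_inequality_decay (N : ℕ) (hN : 1 ≤ N) (c : ℝ) (hc : 0 < c)
    (H0 H0s : ℝ) (hH0 : H0 ≤ 0) (hH0s : H0s ≤ 0)
    (ζ : ℝ → ℝ)
    (hζdiff : ∀ t : ℝ, 0 < t → DifferentiableAt ℝ ζ t)
    (hζpos : ∀ t : ℝ, 0 < t → 0 < ζ t)
    (hineq : ∀ t : ℝ, 0 < t →
      c * ζ t ^ (1 + 2 / (N : ℝ)) * Real.exp (4 * H0 / (N : ℝ) * t) + (H0s + H0) * ζ t ≤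
        -deriv ζ t) :
    ∀ t : ℝ, 0 < t →
      ζ t ≤ ((N : ℝ) / (2 * c)) ^ ((N : ℝ) / 2) * Real.exp ((-H0s - 2 * H0) * t) *
        t ^ (-(N : ℝ) / 2) := by
  have hNr : (0:ℝ) < (N:ℝ) := by exact_mod_cast Nat.pos_of_ne_zero (by omega)
  intro T hT
  set θ : ℝ := H0s + H0 with hθdef
  set p : ℝ := -2 / (N:ℝ) with hpdef
  have hpneg : p < 0 := div_neg_of_neg_of_pos (by norm_num) hNr
  set u : ℝ → ℝ := fun x => Real.exp (θ * x) * ζ x with hudef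
  set g : ℝ → ℝ := fun x => u x ^ p with hgdef
  have hupos : ∀ t : ℝ, 0 < t → 0 < u t := fun t ht => mul_pos (Real.exp_pos _) (hζpos t ht)
  have hgpos : ∀ t : ℝ, 0 < t → 0 < g t := fun t ht => Real.rpow_pos_of_pos (hupos t ht) p
  set K : ℝ := 2 * c / (N:ℝ) * Real.exp (2 * H0 / (N:ℝ) * T) with hKdef
  have hKpos : 0 < K := mul_pos (div_pos (by linarith) hNr) (Real.exp_pos _)
  -- derivative of g
  have hgderiv : ∀ t : ℝ, 0 < t → HasDerivAt g
      ((Real.exp (θ * t) * θ * ζ t + Real.exp (θ * t) * deriv ζ t) * p * u t ^ (p - 1)) t := by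
    intro t ht
    have h0 : HasDerivAt (fun x : ℝ => θ * x) θ t := by
      simpa using (hasDerivAt_id t).const_mul θ
    have h1 : HasDerivAt (fun x : ℝ => Real.exp (θ * x)) (Real.exp (θ * t) * θ) t := h0.exp
    have h2 : HasDerivAt u
        (Real.exp (θ * t) * θ * ζ t + Real.exp (θ * t) * deriv ζ t) t :=
      h1.mul (hζdiff t ht).hasDerivAt
    exact h2.rpow_const (Or.inl (ne_of_gt (hupos t ht)))
  -- lower bound for the derivative of g on (0, T)
  have hderiv_ge : ∀ t ∈ Set.Ioo (0:ℝ) T, K ≤ deriv g t := by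
    intro t ht
    obtain ⟨ht0, htT⟩ := ht
    rw [(hgderiv t ht0).deriv]
    have hζt := hζpos t ht0
    have hut := hupos t ht0
    have hup : 0 < u t ^ (p - 1) := Real.rpow_pos_of_pos hut _
    have hkey : c * ζ t ^ (1 + 2 / (N:ℝ)) * Real.exp (4 * H0 / (N:ℝ) * t) ≤
        -(deriv ζ t) - θ * ζ t := by
      have := hineq t ht0
      linarith
    -- rewrite the derivative
    have heq : (Real.exp (θ * t) * θ * ζ t + Real.exp (θ * t) * deriv ζ t) * p * u t ^ (p - 1)
        = (-p) * u t ^ (p - 1) * Real.exp (θ * t) * (-(deriv ζ t) - θ * ζ t) := by ring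
    rw [heq]
    have step1 : (-p) * u t ^ (p - 1) * Real.exp (θ * t) *
        (c * ζ t ^ (1 + 2 / (N:ℝ)) * Real.exp (4 * H0 / (N:ℝ) * t)) ≤
        (-p) * u t ^ (p - 1) * Real.exp (θ * t) * (-(deriv ζ t) - θ * ζ t) := by
      apply mul_le_mul_of_nonneg_left hkey
      apply mul_nonneg (mul_nonneg (by linarith) hup.le) (Real.exp_pos _).le
    refine le_trans ?_ step1
    -- compute the left side exactly
    have hue : u t ^ (p - 1) = Real.exp (θ * t * (p - 1)) * ζ t ^ (p - 1) := by
      rw [hudef]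
      rw [Real.mul_rpow (Real.exp_pos _).le hζt.le]
      congr 1
      rw [Real.rpow_def_of_pos (Real.exp_pos _), Real.log_exp]
    have hζe : ζ t ^ (p - 1) * ζ t ^ (1 + 2 / (N:ℝ)) = 1 := by
      rw [← Real.rpow_add hζt]
      have : p - 1 + (1 + 2 / (N:ℝ)) = 0 := by
        rw [hpdef]; field_simp; ring
      rw [this, Real.rpow_zero]
    have hLHS : (-p) * u t ^ (p - 1) * Real.exp (θ * t) *
        (c * ζ t ^ (1 + 2 / (N:ℝ)) * Real.exp (4 * H0 / (N:ℝ) * t)) =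
        2 * c / (N:ℝ) * Real.exp (θ * t * (p - 1) + θ * t + 4 * H0 / (N:ℝ) * t) := by
      rw [hue, Real.exp_add, Real.exp_add]
      have hpe : -p = 2 / (N:ℝ) := by rw [hpdef]; ring
      calc (-p) * (Real.exp (θ * t * (p - 1)) * ζ t ^ (p - 1)) * Real.exp (θ * t) *
            (c * ζ t ^ (1 + 2 / (N:ℝ)) * Real.exp (4 * H0 / (N:ℝ) * t))
          = (-p) * c * (ζ t ^ (p - 1) * ζ t ^ (1 + 2 / (N:ℝ))) *
            (Real.exp (θ * t * (p - 1)) * Real.exp (θ * t) * Real.exp (4 * H0 / (N:ℝ) * t)) := by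
            ring
        _ = 2 * c / (N:ℝ) * (Real.exp (θ * t * (p - 1)) * Real.exp (θ * t) *
            Real.exp (4 * H0 / (N:ℝ) * t)) := by rw [hζe, hpe]; ring
    rw [hLHS, hKdef]
    apply mul_le_mul_of_nonneg_left _ (by positivity)
    apply Real.exp_le_exp.mpr
    have hNne : (N:ℝ) ≠ 0 := ne_of_gt hNr
    have hexp : θ * t * (p - 1) + θ * t + 4 * H0 / (N:ℝ) * t
        = 2 * H0 / (N:ℝ) * t + (-2 * H0s / (N:ℝ)) * t := by
      rw [hpdef, hθdef]; field_simp; ring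
    rw [hexp]
    have h1 : 0 ≤ (-2 * H0s / (N:ℝ)) * t := by
      apply mul_nonneg _ ht0.le
      apply div_nonneg (by linarith) hNr.le
    have h2 : 2 * H0 / (N:ℝ) * T ≤ 2 * H0 / (N:ℝ) * t := by
      apply mul_le_mul_of_nonpos_left htT.le
      apply div_nonpos_of_nonpos_of_nonneg (by linarith) hNr.le
    linarith
  -- mean value inequality on Ioc 0 T
  have hconv : Convex ℝ (Set.Ioc (0:ℝ) T) := convex_Ioc 0 T
  have hgdiff : ∀ t ∈ Set.Ioc (0:ℝ) T, DifferentiableAt ℝ g t :=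
    fun t ht => (hgderiv t ht.1).differentiableAt
  have hcont : ContinuousOn g (Set.Ioc (0:ℝ) T) :=
    fun t ht => (hgdiff t ht).continuousAt.continuousWithinAt
  have hint : interior (Set.Ioc (0:ℝ) T) = Set.Ioo 0 T := interior_Ioc
  have hdiffOn : DifferentiableOn ℝ g (interior (Set.Ioc (0:ℝ) T)) := by
    rw [hint]
    exact fun t ht => ((hgderiv t ht.1).differentiableAt).differentiableWithinAt
  have hmvt := hconv.mul_sub_le_image_sub_of_le_deriv hcont hdiffOn
    (by rw [hint]; exact hderiv_ge)
  -- K * T ≤ g T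
  have hKT : K * T ≤ g T := by
    by_contra hcon
    push_neg at hcon
    set s : ℝ := min ((K * T - g T) / (2 * K)) (T / 2) with hsdef
    have hs0 : 0 < s := by
      apply lt_min
      · apply div_pos (by linarith) (by linarith)
      · linarith
    have hsT : s ≤ T := le_trans (min_le_right _ _) (by linarith)
    have hsT' : s < T := lt_of_le_of_lt (min_le_right _ _) (by linarith)
    have := hmvt s ⟨hs0, hsT⟩ T ⟨hT, le_refl T⟩ hsT'.le
    have hgs : 0 < g s := hgpos s hs0
    have hKs : K * s ≤ (K * T - g T) / 2 := by
      have h1 : s ≤ (K * T - g T) / (2 * K) := min_le_left _ _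
      calc K * s ≤ K * ((K * T - g T) / (2 * K)) :=
            mul_le_mul_of_nonneg_left h1 hKpos.le
        _ = (K * T - g T) / 2 := by field_simp
    nlinarith
  -- invert
  have hKTpos : 0 < K * T := mul_pos hKpos hT
  have hinv : u T ≤ (K * T) ^ (-(N:ℝ) / 2) := by
    have h1 : (g T) ^ (-(N:ℝ) / 2) ≤ (K * T) ^ (-(N:ℝ) / 2) :=
      Real.rpow_le_rpow_of_nonpos hKTpos hKT (by
        apply div_nonpos_of_nonpos_of_nonneg _ (by norm_num)
        simpa using hNr.le)
    have h2 : (g T) ^ (-(N:ℝ) / 2) = u T := by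
      rw [hgdef]
      dsimp only
      rw [← Real.rpow_mul (hupos T hT).le]
      have hp1 : p * (-(N:ℝ) / 2) = 1 := by
        rw [hpdef]; field_simp
      rw [hp1, Real.rpow_one]
    rw [← h2]; exact h1
  -- compute (K * T) ^ (-(N)/2)
  have hKq : (K * T) ^ (-(N:ℝ) / 2) =
      ((N:ℝ) / (2 * c)) ^ ((N:ℝ) / 2) * Real.exp (-H0 * T) * T ^ (-(N:ℝ) / 2) := by
    rw [hKdef, Real.mul_rpow hKpos.le hT.le,
      Real.mul_rpow (by positivity) (Real.exp_pos _).le]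
    congr 1
    congr 1
    · have h3 : (N:ℝ) / (2 * c) = (2 * c / (N:ℝ))⁻¹ := by
        rw [inv_div]
      rw [h3, Real.inv_rpow (by positivity), ← Real.rpow_neg (by positivity)]
      congr 1
      ring
    · rw [Real.rpow_def_of_pos (Real.exp_pos _), Real.log_exp]
      congr 1
      field_simp
  -- conclude
  have hζT : ζ T ≤ Real.exp (-(θ * T)) * ((K * T) ^ (-(N:ℝ) / 2)) := by
    have h4 := mul_le_mul_of_nonneg_left hinv (Real.exp_pos (-(θ * T))).le
    have h5 : Real.exp (-(θ * T)) * u T = ζ T := by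
      rw [hudef]
      dsimp only
      rw [← mul_assoc, ← Real.exp_add]
      simp
    rwa [h5] at h4
  calc ζ T ≤ Real.exp (-(θ * T)) * ((K * T) ^ (-(N:ℝ) / 2)) := hζT
    _ = ((N:ℝ) / (2 * c)) ^ ((N:ℝ) / 2) *
        (Real.exp (-(θ * T)) * Real.exp (-H0 * T)) * T ^ (-(N:ℝ) / 2) := by
        rw [hKq]; ring
    _ = ((N:ℝ) / (2 * c)) ^ ((N:ℝ) / 2) * Real.exp ((-H0s - 2 * H0) * T) *
        T ^ (-(N:ℝ) / 2) := by
        rw [← Real.exp_add]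
        congr 2
        rw [hθdef]; ring
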